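/- arXiv:1108.4662 — 4 statements merged into one kernel-verified Lean document; each statement's English description precedes it below -/
import Mathlib

section
/- The sequence (k² + k)_{k=0}^∞ = (k(k+1))_{k=0}^∞ is a Legendre multiplier sequence. -/
open Polynomial

/-- A real polynomial is *hyperbolic* if all of its complex roots are real
(the zero polynomial and nonzero constants are vacuously hyperbolic). -/
def Hyperbolic (p : Polynomial ℝ) : Prop :=
  ∀ z ∈ (p.map (algebraMap ℝ ℂ)).roots, z.im = 0

/-- `γ` is a multiplier sequence for the simple set `q`: the linear operator
sending `q k` to `γ k • q k` maps hyperbolic polynomials to hyperbolic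
polynomials.  (Since `q` is a simple set, every real polynomial has a unique
expansion `∑ a k • q k`, so this quantification over coefficient families
expresses exactly that property.) -/
def IsMultiplierSeqFor (q : ℕ → Polynomial ℝ) (γ : ℕ → ℝ) : Prop :=
  ∀ (n : ℕ) (a : ℕ → ℝ),
    Hyperbolic (∑ k ∈ Finset.range n, C (a k) * q k) →
    Hyperbolic (∑ k ∈ Finset.range n, C (γ k * a k) * q k)

/-- The Legendre polynomials, via Rodrigues' formula
`Le n = (1/(2^n n!)) Dⁿ[(x²-1)ⁿ]`. -/
noncomputable def legendre (n : ℕ) : Polynomial ℝ :=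
  C (1 / (2 ^ n * n.factorial : ℝ)) * derivative^[n] ((X ^ 2 - 1) ^ n)

/-- A Legendre multiplier sequence. -/
def IsLegendreMS (γ : ℕ → ℝ) : Prop := IsMultiplierSeqFor legendre γ

/-! ### Auxiliary results on hyperbolic polynomials -/

lemma aux14_hyperbolic_of_card {p : ℝ[X]} (h : Multiset.card p.roots = p.natDegree) :
    Hyperbolic p := by
  intro z hz
  rw [← roots_map_of_injective_of_card_eq_natDegree (algebraMap ℝ ℂ).injective h] at hz
  obtain ⟨r, -, rfl⟩ := Multiset.mem_map.1 hz
  simp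

lemma aux14_hyperbolic_zero : Hyperbolic 0 := by intro z hz; simp at hz

lemma aux14_card_of_hyperbolic {p : ℝ[X]} (hp : p ≠ 0) (h : Hyperbolic p) :
    Multiset.card p.roots = p.natDegree := by
  classical
  set f := algebraMap ℝ ℂ with hf
  have hinj : Function.Injective f := f.injective
  have hmap : p.map f ≠ 0 := (Polynomial.map_ne_zero_iff hinj).2 hp
  set m : Multiset ℝ := (p.map f).roots.map Complex.re with hmdef
  have hm : m.map f = (p.map f).roots := by
    rw [hmdef, Multiset.map_map]
    calc ((p.map f).roots.map (f ∘ Complex.re)) = (p.map f).roots.map id :=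
          Multiset.map_congr rfl (fun z hz => by
            have hz0 := h z hz
            simp only [Function.comp_apply, id]
            apply Complex.ext <;> simp [hf, hz0])
      _ = _ := Multiset.map_id _
  have hle : m ≤ p.roots := by
    rw [← Multiset.prod_X_sub_C_dvd_iff_le_roots hp, ← map_dvd_map' f,
      Polynomial.map_multiset_prod, Multiset.map_map]
    have : (m.map (Polynomial.map f ∘ fun a => X - C a)) =
        ((p.map f).roots.map fun a => X - C a) := by
      calc m.map (Polynomial.map f ∘ fun a => X - C a)
          = m.map (fun a => X - C (f a)) :=
            Multiset.map_congr rfl (fun a _ => by simp)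
        _ = (m.map f).map (fun a => X - C a) := by
            simp [hmdef, Multiset.map_map, Function.comp]
        _ = _ := by rw [hm]
    rw [this]
    exact prod_multiset_X_sub_C_dvd _
  have hcard : p.natDegree = Multiset.card m := by
    rw [hmdef, Multiset.card_map]
    exact (natDegree_map f).symm.trans (IsAlgClosed.splits (p.map f)).natDegree_eq_card_roots
  exact le_antisymm (card_roots' p) (hcard ▸ Multiset.card_le_card hle)

lemma aux14_hyperbolic_mul {p q : ℝ[X]} (hp : Hyperbolic p) (hq : Hyperbolic q) :
    Hyperbolic (p * q) := by
  intro z hz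
  rw [Polynomial.map_mul] at hz
  by_cases h0 : p.map (algebraMap ℝ ℂ) * q.map (algebraMap ℝ ℂ) = 0
  · rw [h0] at hz; simp at hz
  · rw [roots_mul h0, Multiset.mem_add] at hz
    rcases hz with hz | hz
    exacts [hp z hz, hq z hz]

lemma aux14_hyperbolic_derivative {p : ℝ[X]} (hp : Hyperbolic p) :
    Hyperbolic (derivative p) := by
  by_cases h0 : p = 0
  · rw [h0]; simpa using aux14_hyperbolic_zero
  by_cases h1 : p.natDegree = 0
  · rw [eq_C_of_natDegree_eq_zero h1]; simpa using aux14_hyperbolic_zero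
  · apply aux14_hyperbolic_of_card
    have hdeg : (derivative p).natDegree = p.natDegree - 1 := by
      have := degree_derivative_eq p (Nat.pos_of_ne_zero h1)
      exact natDegree_eq_of_degree_eq_some (by exact_mod_cast this)
    have hc := aux14_card_of_hyperbolic h0 hp
    have h2 := card_roots_le_derivative p
    have h3 := card_roots' (derivative p)
    omega

lemma aux14_hyperbolic_X_sq_sub_one : Hyperbolic ((X : ℝ[X]) ^ 2 - 1) := by
  intro z hz
  have hz' : z ^ 2 - 1 = 0 := by
    have := isRoot_of_mem_roots hz
    simpa using this
  have : (z - 1) * (z + 1) = 0 := by ring_nf; linear_combination hz'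
  rcases mul_eq_zero.1 this with h | h
  · have : z = 1 := by linear_combination h
    simp [this]
  · have : z = -1 := by linear_combination h
    simp [this]

/-! ### The Legendre differential equation -/

noncomputable def aux14v : ℝ[X] := X ^ 2 - 1

lemma aux14_dv : derivative aux14v = C 2 * X := by
  simp [aux14v]; rw [← C_1, ← C_add]; norm_num

lemma aux14_iterv {j : ℕ} (hj : 3 ≤ j) : derivative^[j] aux14v = 0 := by
  apply iterate_derivative_eq_zero
  have h1 : natDegree aux14v ≤ 2 := by
    unfold aux14v
    compute_degree
  omega

lemma aux14_iterX {j : ℕ} (hj : 2 ≤ j) : derivative^[j] (X : ℝ[X]) = 0 := by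
  apply iterate_derivative_eq_zero
  simp; omega

lemma aux14_step1 (m : ℕ) :
    aux14v * derivative (aux14v ^ (m + 1)) =
      C (2 * (m + 1 : ℝ)) * (X * aux14v ^ (m + 1)) := by
  rw [derivative_pow, aux14_dv, Nat.add_sub_cancel, C_mul]
  push_cast
  ring

lemma aux14_d2v : derivative^[2] aux14v = C 2 := by
  show derivative (derivative^[1] aux14v) = C 2
  simp only [Function.iterate_one]
  rw [aux14_dv]; simp

lemma aux14_hch (m : ℕ) : (m + 2).choose m * 2 = (m + 2) * (m + 1) := by
  induction m with
  | zero => rfl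
  | succ n ih =>
    have h1 : (n + 3).choose (n + 1) = (n + 2).choose n + (n + 2).choose (n + 1) :=
      Nat.choose_succ_succ' (n + 2) n ▸ rfl
    have h2 : (n + 2).choose (n + 1) = n + 2 := Nat.choose_succ_self_right (n + 1)
    rw [h1, h2, add_mul, ih]
    ring

lemma aux14_coreL (m : ℕ) :
    derivative^[m+2] (aux14v * derivative (aux14v ^ (m + 1))) =
      ((m + 2).choose m) • (C 2 * derivative^[m+1] (aux14v ^ (m + 1)))
      + (m + 2) • (C 2 * X * derivative^[m+2] (aux14v ^ (m + 1)))
      + aux14v * derivative^[m+3] (aux14v ^ (m + 1)) := by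
  set u := aux14v ^ (m + 1) with hu
  rw [iterate_derivative_mul]
  rw [show (m + 2).succ = m + 2 + 1 from rfl]
  rw [Finset.sum_range_succ, Finset.sum_range_succ, Finset.sum_range_succ]
  rw [Finset.sum_eq_zero (fun k hk => by
    rw [aux14_iterv (by have := Finset.mem_range.1 hk; omega), zero_mul, smul_zero])]
  have e0 : m + 2 - (m + 2) = 0 := by omega
  have e1 : m + 2 - (m + 1) = 1 := by omega
  have e2 : m + 2 - m = 2 := by omega
  rw [e0, e1, e2, aux14_d2v]
  simp only [Function.iterate_zero_apply, Function.iterate_one, aux14_dv,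
    Nat.choose_succ_self_right, Nat.choose_self, one_smul,
    ← Function.iterate_succ_apply derivative]
  simp only [Nat.succ_eq_add_one, zero_add]

lemma aux14_coreR (m : ℕ) :
    derivative^[m+2] (C (2 * (m + 1 : ℝ)) * (X * aux14v ^ (m + 1))) =
      C (2 * (m + 1 : ℝ)) *
        ((m + 2) • derivative^[m+1] (aux14v ^ (m + 1))
          + X * derivative^[m+2] (aux14v ^ (m + 1))) := by
  set u := aux14v ^ (m + 1) with hu
  rw [iterate_derivative_C_mul, iterate_derivative_mul]
  rw [show (m + 2).succ = m + 2 + 1 from rfl]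
  rw [Finset.sum_range_succ, Finset.sum_range_succ]
  rw [Finset.sum_eq_zero (fun k hk => by
    rw [aux14_iterX (by have := Finset.mem_range.1 hk; omega), zero_mul, smul_zero])]
  have e0 : m + 2 - (m + 2) = 0 := by omega
  have e1 : m + 2 - (m + 1) = 1 := by omega
  rw [e0, e1]
  simp only [Function.iterate_zero_apply, Function.iterate_one, derivative_X,
    Nat.choose_succ_self_right, Nat.choose_self, one_smul, one_mul, zero_add,
    Nat.succ_eq_add_one]

lemma aux14_core (m : ℕ) :
    derivative (aux14v * derivative (derivative^[m+1] (aux14v ^ (m + 1)))) =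
      C (((m : ℝ) + 1) ^ 2 + ((m : ℝ) + 1)) * derivative^[m+1] (aux14v ^ (m + 1)) := by
  set u := aux14v ^ (m + 1) with hu
  have E := congrArg (fun p => derivative^[m+2] p) (aux14_step1 m)
  rw [aux14_coreL, aux14_coreR] at E
  have hDD : derivative (derivative^[m+1] u) = derivative^[m+2] u :=
    (Function.iterate_succ_apply' _ _ _).symm
  have hDDD : derivative (derivative^[m+2] u) = derivative^[m+3] u :=
    (Function.iterate_succ_apply' _ _ _).symm
  rw [derivative_mul, aux14_dv, hDD, hDDD]
  have hc : (((m + 2).choose m : ℕ) : ℝ[X]) * 2 = ((m : ℝ[X]) + 2) * ((m : ℝ[X]) + 1) := by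
    exact_mod_cast congrArg (Nat.cast : ℕ → ℝ[X]) (aux14_hch m)
  simp only [nsmul_eq_mul, map_mul, map_add, map_pow, map_one, map_ofNat, map_natCast] at E ⊢
  push_cast at E
  linear_combination E - (derivative^[m+1] u) * hc

lemma aux14_eigen (n : ℕ) :
    derivative (((X : ℝ[X]) ^ 2 - 1) * derivative (legendre n)) =
      C ((n : ℝ) ^ 2 + n) * legendre n := by
  have hv : ((X : ℝ[X]) ^ 2 - 1) = aux14v := rfl
  cases n with
  | zero => simp [legendre]
  | succ m =>
    rw [legendre, hv, derivative_C_mul, mul_left_comm, derivative_C_mul, aux14_core m]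
    push_cast
    ring

theorem stmt_14 : IsLegendreMS (fun k => (k : ℝ) ^ 2 + k) := by
  intro n a h
  have key : (∑ k ∈ Finset.range n, C (((k : ℝ) ^ 2 + k) * a k) * legendre k) =
      derivative (((X : ℝ[X]) ^ 2 - 1) *
        derivative (∑ k ∈ Finset.range n, C (a k) * legendre k)) := by
    rw [derivative_sum, Finset.mul_sum, derivative_sum]
    refine (Finset.sum_congr rfl fun k _ => ?_).symm
    rw [derivative_C_mul, mul_left_comm, derivative_C_mul, aux14_eigen k, C_mul]
    ring
  show Hyperbolic (∑ k ∈ Finset.range n, C (((k : ℝ) ^ 2 + k) * a k) * legendre k)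
  rw [key]
  exact aux14_hyperbolic_derivative
    (aux14_hyperbolic_mul aux14_hyperbolic_X_sq_sub_one (aux14_hyperbolic_derivative h))
end

section
/- The sequence (k² + k + 1)_{k=0}^∞ is a Legendre multiplier sequence. -/
open Polynomial

namespace Stmt16


noncomputable def Tg {R : Type*} [CommRing R] (p : R[X]) : R[X] :=
  (X ^ 2 - 1) * derivative (derivative p) + 2 * (X * derivative p) + p

noncomputable def gg {R : Type*} [CommRing R] (p : R[X]) : R[X] :=
  (X ^ 2 - 1) * derivative p + X * p

def Good (z A B Cv : ℂ) : Prop :=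
  Cv ≠ 0 ∧ ∀ ε : ℂ, ε.im ≤ 0 → A + 2 * B * ε + (z ^ 2 - 1) * Cv * ε ^ 2 ≠ 0

lemma w_ne_zero {z : ℂ} (hz : z.im ≠ 0) : z ^ 2 - 1 ≠ 0 := by
  intro h
  have h2 : (z - 1) * (z + 1) = 0 := by linear_combination h
  rcases mul_eq_zero.mp h2 with h1 | h1
  · have : z = 1 := by linear_combination h1
    rw [this] at hz; simp at hz
  · have : z = -1 := by linear_combination h1
    rw [this] at hz; simp at hz

lemma aux_lin_root {z u ε : ℂ} (hz : 0 < z.im) (hu : u.im = z.im)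
    (hε : ε.im ≤ 0) (h1 : u * ε + 1 = 0) : False := by
  have hune : u ≠ 0 := by
    intro h; rw [h, zero_mul, zero_add] at h1; exact one_ne_zero h1
  have hεeq : ε = -u⁻¹ := by
    field_simp
    linear_combination h1
  have hεim : ε.im = u.im / Complex.normSq u := by
    rw [hεeq, Complex.neg_im, Complex.inv_im]; ring
  have hns : 0 < Complex.normSq u := Complex.normSq_pos.mpr hune
  rw [hεim, hu] at hε
  have : 0 < z.im / Complex.normSq u := div_pos hz hns
  linarith

lemma good_base {z : ℂ} (hz : 0 < z.im) : Good z 1 z 1 := by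
  refine ⟨one_ne_zero, ?_⟩
  intro ε hε h0
  have hfac : ((z - 1) * ε + 1) * ((z + 1) * ε + 1) = 0 := by linear_combination h0
  rcases mul_eq_zero.mp hfac with h1 | h1
  · exact aux_lin_root hz (by simp) hε h1
  · exact aux_lin_root hz (by simp) hε h1

lemma good_step {z : ℂ} (hz : 0 < z.im) {s : ℂ} (hs : 0 < s.im) (A B Cv : ℂ)
    (h : Good z A B Cv) :
    Good z (s * A + 2 * B) (s * B + (z ^ 2 - 1) * Cv) (s * Cv) := by
  obtain ⟨hCv, hgood⟩ := h
  have hw : z ^ 2 - 1 ≠ 0 := w_ne_zero (ne_of_gt hz)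
  have hLne : (z ^ 2 - 1) * Cv ≠ 0 := mul_ne_zero hw hCv
  have hsne : s ≠ 0 := by intro h; rw [h] at hs; simp at hs
  obtain ⟨d, hd⟩ := IsAlgClosed.exists_pow_nat_eq (B ^ 2 - (z ^ 2 - 1) * Cv * A) zero_lt_two
  obtain ⟨ρ1, ρ2, hsum, hA⟩ :
      ∃ ρ1 ρ2 : ℂ, 2 * B = -((z ^ 2 - 1) * Cv * (ρ1 + ρ2)) ∧
        A = (z ^ 2 - 1) * Cv * (ρ1 * ρ2) := by
    refine ⟨(-B + d) / ((z ^ 2 - 1) * Cv), (-B - d) / ((z ^ 2 - 1) * Cv), ?_, ?_⟩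
    · field_simp
      ring
    · field_simp
      linear_combination hd
  have hfac : ∀ ε : ℂ, A + 2 * B * ε + (z ^ 2 - 1) * Cv * ε ^ 2
      = (z ^ 2 - 1) * Cv * (ε - ρ1) * (ε - ρ2) := by
    intro ε
    linear_combination ε * hsum + hA
  have hroot : ∀ ρ : ℂ, A + 2 * B * ρ + (z ^ 2 - 1) * Cv * ρ ^ 2 = 0 → 0 < ρ.im := by
    intro ρ hρ
    by_contra hneg
    exact hgood ρ (le_of_not_gt hneg) hρ
  have him1 : 0 < ρ1.im := hroot ρ1 (by rw [hfac ρ1]; ring)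
  have him2 : 0 < ρ2.im := hroot ρ2 (by rw [hfac ρ2]; ring)
  refine ⟨mul_ne_zero hsne hCv, ?_⟩
  intro ε hε heq
  have he1im : (ε - ρ1).im < 0 := by simp [Complex.sub_im]; linarith
  have he2im : (ε - ρ2).im < 0 := by simp [Complex.sub_im]; linarith
  have he1ne : ε - ρ1 ≠ 0 := by intro h; rw [h] at he1im; simp at he1im
  have he2ne : ε - ρ2 ≠ 0 := by intro h; rw [h] at he2im; simp at he2im
  have key : (z ^ 2 - 1) * Cv * (s * (ε - ρ1) * (ε - ρ2) + ((ε - ρ1) + (ε - ρ2))) = 0 := by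
    linear_combination heq + (-s * ε - 1) * hsum + (-s) * hA
  have key2 : s * (ε - ρ1) * (ε - ρ2) + ((ε - ρ1) + (ε - ρ2)) = 0 :=
    (mul_eq_zero.mp key).resolve_left hLne
  have hseq : s + (ε - ρ1)⁻¹ + (ε - ρ2)⁻¹ = 0 := by
    field_simp
    linear_combination key2
  have hcim := congrArg Complex.im hseq
  rw [Complex.add_im, Complex.add_im, Complex.inv_im, Complex.inv_im] at hcim
  have hn1 : 0 < Complex.normSq (ε - ρ1) := Complex.normSq_pos.mpr he1ne
  have hn2 : 0 < Complex.normSq (ε - ρ2) := Complex.normSq_pos.mpr he2ne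
  have p1 : 0 < -(ε - ρ1).im / Complex.normSq (ε - ρ1) := div_pos (by linarith) hn1
  have p2 : 0 < -(ε - ρ2).im / Complex.normSq (ε - ρ2) := div_pos (by linarith) hn2
  simp only [Complex.zero_im] at hcim
  linarith
variable {R : Type*} [CommRing R]

lemma Tg_mul_X_sub_C (r : R) (q : R[X]) :
    Tg ((X - C r) * q) = (X - C r) * Tg q + 2 * gg q := by
  simp only [Tg, gg, derivative_mul, derivative_sub, derivative_add, derivative_X, derivative_C, derivative_one, derivative_zero]
  ring

lemma gg_mul_X_sub_C (r : R) (q : R[X]) :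
    gg ((X - C r) * q) = (X - C r) * gg q + (X ^ 2 - 1) * q := by
  simp only [gg, derivative_mul, derivative_sub, derivative_X, derivative_C]
  ring

lemma Tg_one : Tg (1 : R[X]) = 1 := by simp [Tg]

lemma gg_one : gg (1 : R[X]) = X := by simp [gg]

lemma Tg_C_mul (a : R) (p : R[X]) : Tg (C a * p) = C a * Tg p := by
  simp only [Tg, derivative_C_mul]
  ring

lemma Tg_add (p q : R[X]) : Tg (p + q) = Tg p + Tg q := by
  simp only [Tg, derivative_add]
  ring

lemma Tg_zero : Tg (0 : R[X]) = 0 := by simp [Tg]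

lemma Tg_map {S : Type*} [CommRing S] (f : R →+* S) (p : R[X]) :
    (Tg p).map f = Tg (p.map f) := by
  simp only [Tg, Polynomial.map_add, Polynomial.map_mul, Polynomial.map_sub,
    Polynomial.map_pow, Polynomial.map_one, Polynomial.map_X, Polynomial.map_ofNat,
    derivative_map]

lemma Tg_sum {ι : Type*} (s : Finset ι) (f : ι → R[X]) :
    Tg (∑ i ∈ s, f i) = ∑ i ∈ s, Tg (f i) := by
  classical
  induction s using Finset.induction_on with
  | empty => simp [Tg_zero]
  | insert a s hnot ih => rw [Finset.sum_insert hnot, Finset.sum_insert hnot, Tg_add, ih]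

lemma good_prod (z : ℂ) (hz : 0 < z.im) (R : Multiset ℝ) :
    Good z ((Tg ((R.map (fun r : ℝ => X - C (r : ℂ))).prod)).eval z)
      ((gg ((R.map (fun r : ℝ => X - C (r : ℂ))).prod)).eval z)
      (((R.map (fun r : ℝ => X - C (r : ℂ))).prod).eval z) := by
  induction R using Multiset.induction_on with
  | empty =>
      simp only [Multiset.map_zero, Multiset.prod_zero, Tg_one, gg_one, eval_one, eval_X]
      exact good_base hz
  | cons r R ih =>
      simp only [Multiset.map_cons, Multiset.prod_cons]
      rw [Tg_mul_X_sub_C, gg_mul_X_sub_C]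
      simp only [eval_add, eval_mul, eval_sub, eval_X, eval_C, eval_pow, eval_one,
        eval_ofNat]
      have hs : 0 < (z - (r : ℂ)).im := by
        simp only [Complex.sub_im, Complex.ofReal_im, sub_zero]
        exact hz
      exact good_step hz hs _ _ _ ih

lemma hyperbolic_Tg (p : Polynomial ℝ) (hp : ∀ z ∈ (p.map (algebraMap ℝ ℂ)).roots, z.im = 0) :
    ∀ z ∈ ((Tg p).map (algebraMap ℝ ℂ)).roots, z.im = 0 := by
  intro z hzmem
  by_contra him
  obtain ⟨hTne, hroot⟩ := Polynomial.mem_roots'.mp hzmem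
  -- p ≠ 0
  have hpne : p ≠ 0 := by
    rintro rfl
    rw [Tg_zero] at hTne
    simp at hTne
  have hinj : Function.Injective (algebraMap ℝ ℂ) := (algebraMap ℝ ℂ).injective
  set q : Polynomial ℂ := p.map (algebraMap ℝ ℂ) with hq
  have hqne : q ≠ 0 := (Polynomial.map_ne_zero_iff hinj).mpr hpne
  have hcard : q.roots.card = q.natDegree :=
    (Polynomial.splits_iff_card_roots).mp (IsAlgClosed.splits q)
  have hfact : C q.leadingCoeff * (q.roots.map fun a => X - C a).prod = q :=
    Polynomial.C_leadingCoeff_mul_prod_multiset_X_sub_C hcard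
  -- roots are real
  set Rts : Multiset ℝ := q.roots.map Complex.re with hRts
  have hmapeq : q.roots.map (fun a => X - C a)
      = Rts.map (fun r : ℝ => X - C (r : ℂ)) := by
    rw [hRts, Multiset.map_map]
    apply Multiset.map_congr rfl
    intro a ha
    have : (a.re : ℂ) = a := Complex.ext (by simp) (by simp [hp a ha])
    simp [Function.comp, this]
  have hfact2 : C q.leadingCoeff * (Rts.map (fun r : ℝ => X - C (r : ℂ))).prod = q := by
    rw [← hmapeq]; exact hfact
  have hlc : q.leadingCoeff ≠ 0 := leadingCoeff_ne_zero.mpr hqne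
  -- pick z₀ in the upper half plane with eval z₀ (Tg q) = 0
  have hTgq : (Tg p).map (algebraMap ℝ ℂ) = Tg q := Tg_map _ p
  have heval : (Tg q).eval z = 0 := by rw [← hTgq]; exact hroot
  have key : ∀ z₀ : ℂ, 0 < z₀.im → (Tg q).eval z₀ ≠ 0 := by
    intro z₀ hz₀
    have hgood := good_prod z₀ hz₀ Rts
    obtain ⟨-, h2⟩ := hgood
    have hA := h2 0 (by simp)
    simp only [mul_zero, add_zero, ne_eq, zero_pow, two_ne_zero] at hA
    rw [← hfact2, Tg_C_mul]
    simp only [eval_mul, eval_C]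
    intro hcontra
    rcases mul_eq_zero.mp hcontra with h | h
    · exact hlc h
    · exact hA (by simpa using h)
  rcases lt_trichotomy z.im 0 with hneg | hzero | hpos
  · -- use conj z
    have hconj : (Tg q).eval ((starRingEnd ℂ) z) = 0 := by
      have : (Tg q).eval ((starRingEnd ℂ) z) = (starRingEnd ℂ) ((Tg q).eval z) := by
        rw [hq, ← Tg_map]
        have h1 : ∀ (s : Polynomial ℝ) (w : ℂ),
            (s.map (algebraMap ℝ ℂ)).eval ((starRingEnd ℂ) w)
              = (starRingEnd ℂ) ((s.map (algebraMap ℝ ℂ)).eval w) := by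
          intro s w
          rw [Polynomial.eval_map, Polynomial.eval_map, ← Polynomial.aeval_def,
            ← Polynomial.aeval_def]
          exact (Polynomial.aeval_algHom_apply Complex.conjAe.toAlgHom w s)
        exact h1 (Tg p) z
      rw [this, heval, map_zero]
    exact key ((starRingEnd ℂ) z) (by simpa using hneg) hconj
  · exact him hzero
  · exact key z hpos heval





lemma iter_deriv_add (k : ℕ) : ∀ p q : Polynomial ℝ,
    derivative^[k] (p + q) = derivative^[k] p + derivative^[k] q := by
  induction k with
  | zero => intro p q; simp
  | succ k ih =>
      intro p q
      rw [Function.iterate_succ_apply, derivative_add, ih,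
        ← Function.iterate_succ_apply, ← Function.iterate_succ_apply]

/-- iterated derivative of `X * q`. -/
lemma iter_deriv_X_mul (k : ℕ) : ∀ q : Polynomial ℝ,
    derivative^[k + 1] (X * q)
      = X * derivative^[k + 1] q + ((k + 1 : ℕ) : Polynomial ℝ) * derivative^[k] q := by
  induction k with
  | zero =>
      intro q
      simp [derivative_mul]
      ring
  | succ k ih =>
      intro q
      rw [Function.iterate_succ_apply]
      have hd : derivative (X * q) = q + X * derivative q := by
        rw [derivative_mul, derivative_X, one_mul]
      rw [hd]
      rw [iter_deriv_add, ih (derivative q)]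
      simp only [← Function.iterate_succ_apply]
      push_cast
      ring

/-- iterated derivative of `(X²-1) * q`. -/
lemma iter_deriv_sq_mul (m : ℕ) : ∀ q : Polynomial ℝ,
    derivative^[m + 2] ((X ^ 2 - 1) * q)
      = (X ^ 2 - 1) * derivative^[m + 2] q
        + ((2 * (m + 2) : ℕ) : Polynomial ℝ) * (X * derivative^[m + 1] q)
        + (((m + 2) * (m + 1) : ℕ) : Polynomial ℝ) * derivative^[m] q := by
  induction m with
  | zero =>
      intro q
      show derivative (derivative ((X ^ 2 - 1) * q)) = _
      simp only [derivative_mul, derivative_sub, derivative_one, derivative_add,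
        derivative_X_pow, derivative_X, derivative_zero, derivative_C]
      show _ = (X^2-1) * derivative (derivative q) + _ * (X * derivative q) + _ * q
      push_cast
      ring_nf
      simp [map_ofNat]
      ring
  | succ m ih =>
      intro q
      rw [Function.iterate_succ_apply]
      have hd : derivative ((X ^ 2 - 1) * q)
          = (2 : Polynomial ℝ) * (X * q) + (X ^ 2 - 1) * derivative q := by
        simp only [derivative_mul, derivative_sub, derivative_one, derivative_X_pow,
          derivative_zero]
        push_cast
        ring_nf
        simp [map_ofNat]
        ring
      rw [hd, iter_deriv_add]
      have h2 : derivative^[m + 2] ((2 : Polynomial ℝ) * (X * q))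
          = (2 : Polynomial ℝ) * derivative^[m+2] (X * q) := by
        have : (2 : Polynomial ℝ) = C 2 := by simp [map_ofNat]
        rw [this, iterate_derivative_C_mul]
      rw [h2, iter_deriv_X_mul (m+1) q, ih (derivative q)]
      simp only [← Function.iterate_succ_apply]
      push_cast
      ring

/-- The Legendre differential equation for `w = Dⁿ[(x²-1)ⁿ]`. -/
lemma legendre_ode (n : ℕ) :
    (X ^ 2 - 1) * derivative (derivative (derivative^[n] ((X ^ 2 - 1) ^ n : Polynomial ℝ)))
      + 2 * (X * derivative (derivative^[n] ((X ^ 2 - 1) ^ n : Polynomial ℝ)))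
      = ((n * (n + 1) : ℕ) : Polynomial ℝ) * derivative^[n] ((X ^ 2 - 1) ^ n : Polynomial ℝ) := by
  cases n with
  | zero => simp
  | succ m =>
      -- base identity: (X²-1) * D v = 2(m+1) X v
      have hbase : (X ^ 2 - 1 : Polynomial ℝ) * derivative ((X ^ 2 - 1) ^ (m + 1))
          = ((2 * (m + 1) : ℕ) : Polynomial ℝ) * (X * (X ^ 2 - 1) ^ (m + 1)) := by
        rw [derivative_pow]
        simp only [derivative_sub, derivative_one, derivative_X_pow, sub_zero]
        push_cast
        ring_nf
        simp [map_ofNat, C_eq_natCast]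
        ring
      have hiter := congrArg (fun p => derivative^[m + 2] p) hbase
      rw [iter_deriv_sq_mul m (derivative ((X ^ 2 - 1) ^ (m + 1)))] at hiter
      have hnc : derivative^[m+2] (((2 * (m + 1) : ℕ) : Polynomial ℝ) * (X * (X ^ 2 - 1) ^ (m + 1)))
          = ((2 * (m + 1) : ℕ) : Polynomial ℝ) * derivative^[m+2] (X * (X ^ 2 - 1) ^ (m + 1)) := by
        rw [← C_eq_natCast, iterate_derivative_C_mul]
      rw [hnc, iter_deriv_X_mul (m+1) ((X ^ 2 - 1) ^ (m + 1))] at hiter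
      -- now rewrite all iterated derivatives in terms of w
      have e1 : ∀ j : ℕ, derivative^[j] (derivative ((X ^ 2 - 1) ^ (m+1) : Polynomial ℝ))
          = derivative^[j+1] ((X ^ 2 - 1) ^ (m+1) : Polynomial ℝ) := by
        intro j; rw [Function.iterate_succ_apply]
      rw [e1, e1, e1] at hiter
      have e2 : derivative^[m+1+1+1] ((X ^ 2 - 1) ^ (m+1) : Polynomial ℝ)
          = derivative (derivative (derivative^[m+1] ((X ^ 2 - 1) ^ (m+1) : Polynomial ℝ))) := by
        rw [Function.iterate_succ_apply', Function.iterate_succ_apply']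
      have e3 : derivative^[m+1+1] ((X ^ 2 - 1) ^ (m+1) : Polynomial ℝ)
          = derivative (derivative^[m+1] ((X ^ 2 - 1) ^ (m+1) : Polynomial ℝ)) := by
        rw [Function.iterate_succ_apply']
      have e2' : derivative^[m+2+1] ((X ^ 2 - 1) ^ (m+1) : Polynomial ℝ)
          = derivative (derivative (derivative^[m+1] ((X ^ 2 - 1) ^ (m+1) : Polynomial ℝ))) := by
        rw [show m+2+1 = m+1+1+1 from rfl]; exact e2
      have e3' : derivative^[m+1+1] ((X ^ 2 - 1) ^ (m+1) : Polynomial ℝ)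
          = derivative (derivative^[m+1] ((X ^ 2 - 1) ^ (m+1) : Polynomial ℝ)) := e3
      rw [show m+2 = m+1+1 from rfl] at hiter
      rw [e2, e3] at hiter
      push_cast at hiter ⊢
      linear_combination hiter


lemma Tg_legendre (n : ℕ) :
    Tg (legendre n) = C ((n : ℝ) ^ 2 + n + 1) * legendre n := by
  unfold legendre
  rw [Tg_C_mul]
  have hTgw : Tg (derivative^[n] ((X ^ 2 - 1) ^ n : Polynomial ℝ))
      = (((n * (n + 1) : ℕ) : Polynomial ℝ) + 1) * derivative^[n] ((X ^ 2 - 1) ^ n : Polynomial ℝ) := by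
    unfold Tg
    rw [add_mul, one_mul, ← legendre_ode n]
  rw [hTgw]
  have hC : (((n * (n + 1) : ℕ) : Polynomial ℝ) + 1) = C ((n : ℝ) ^ 2 + n + 1) := by
    rw [← C_eq_natCast, ← C_1, ← C_add]
    congr 1
    push_cast
    ring
  rw [hC]
  ring


end Stmt16

open Stmt16 in
theorem stmt_16 : IsLegendreMS (fun k => (k : ℝ) ^ 2 + k + 1) := by
  intro n a hyp
  have hsum : ∑ k ∈ Finset.range n, C (((k : ℝ) ^ 2 + k + 1) * a k) * legendre k
      = Tg (∑ k ∈ Finset.range n, C (a k) * legendre k) := by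
    rw [Tg_sum]
    refine Finset.sum_congr rfl fun k _ => ?_
    rw [Tg_C_mul, Tg_legendre k, ← mul_assoc, ← C_mul, mul_comm (a k)]
  show Hyperbolic (∑ k ∈ Finset.range n, C (((k : ℝ) ^ 2 + k + 1) * a k) * legendre k)
  rw [hsum]
  exact hyperbolic_Tg _ hyp
end

section
/- Let β be a real number with 0 < β < 1. If f is a hyperbolic real polynomial, then the polynomial (x² − 1)·f''(x) + 2x·f'(x) + β·f(x) is hyperbolic; that is, the differential operator (x² − 1)D² + 2xD + β preserves the reality of zeros of real polynomials. -/
open Polynomial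

namespace Stmt17Aux
open Complex

def Mem (δ : ℝ) (t : ℂ) : Prop := δ * Complex.normSq t + t.im ≤ 0

lemma mem_zero (δ : ℝ) : Mem δ 0 := by simp [Mem]

lemma mem_of_im (δ : ℝ) (hδ : 0 < δ) {w : ℂ} (hw : δ ≤ w.im) : Mem δ w⁻¹ := by
  have hw0 : w ≠ 0 := by
    intro h; rw [h] at hw; simp at hw; linarith
  have hN : 0 < Complex.normSq w := Complex.normSq_pos.mpr hw0
  simp only [Mem, Complex.normSq_inv, Complex.inv_im]
  have h1 : δ * (Complex.normSq w)⁻¹ = δ / Complex.normSq w := by ring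
  rw [h1, ← add_div, div_nonpos_iff]
  right
  exact ⟨by linarith, hN.le⟩

lemma im_of_mem (δ : ℝ) {t : ℂ} (ht : Mem δ t) (ht0 : t ≠ 0) :
    δ ≤ (t⁻¹).im := by
  have hN : 0 < Complex.normSq t := Complex.normSq_pos.mpr ht0
  simp only [Mem] at ht
  simp only [Complex.inv_im]
  rw [le_div_iff₀ hN]
  linarith

lemma keyG (δ : ℝ) (s ζ : ℂ) (h0 : ζ ≠ 0) :
    Complex.normSq ζ * (δ * Complex.normSq (s - ζ⁻¹) + (s - ζ⁻¹).im)
      = (δ * Complex.normSq s + s.im) * Complex.normSq ζ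
        - 2 * δ * (s.re * ζ.re - s.im * ζ.im) + ζ.im + δ := by
  have hN : ζ.re * ζ.re + ζ.im * ζ.im ≠ 0 := by
    intro h
    exact h0 (Complex.ext (by nlinarith [sq_nonneg ζ.re, sq_nonneg ζ.im] : ζ.re = 0)
      (by nlinarith [sq_nonneg ζ.re, sq_nonneg ζ.im] : ζ.im = 0))
  simp only [Complex.normSq_apply, Complex.sub_re, Complex.sub_im, Complex.inv_re,
    Complex.inv_im, Complex.normSq_apply]
  field_simp [show ζ.re ^ 2 + ζ.im ^ 2 ≠ 0 by simpa [sq] using hN]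
  ring

lemma concave_step (δ n σ : ℝ) (hδ : 0 < δ) (hn : 2 ≤ n) (hσ : σ ≤ 0)
    (s m₀ m₁ m₂ : ℂ) (hsum : m₁ + m₂ = (n : ℂ) * m₀)
    (h1 : 0 < σ * normSq m₁ - 2 * δ * (s.re * m₁.re - s.im * m₁.im) + m₁.im + δ)
    (h2 : 0 < σ * normSq m₂ - 2 * δ * (s.re * m₂.re - s.im * m₂.im) + m₂.im + δ)
    (h0 : σ * normSq m₀ - 2 * δ * (s.re * m₀.re - s.im * m₀.im) + m₀.im + δ ≤ 0) :
    False := by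
  have hre : m₁.re + m₂.re = n * m₀.re := by
    have := congrArg Complex.re hsum
    simpa [Complex.add_re, Complex.mul_re] using this
  have him : m₁.im + m₂.im = n * m₀.im := by
    have := congrArg Complex.im hsum
    simpa [Complex.add_im, Complex.mul_im] using this
  have hNsq : (n * n) * normSq m₀ = normSq (m₁ + m₂) := by
    rw [hsum]
    simp [Complex.normSq_mul, Complex.normSq_ofReal]
  have hpar : normSq (m₁ + m₂) ≤ 2 * (normSq m₁ + normSq m₂) := by
    simp only [Complex.normSq_apply, Complex.add_re, Complex.add_im]
    nlinarith [sq_nonneg (m₁.re - m₂.re), sq_nonneg (m₁.im - m₂.im)]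
  have hkey : n * normSq m₀ ≤ normSq m₁ + normSq m₂ := by
    have hNn : 0 ≤ normSq m₁ + normSq m₂ :=
      add_nonneg (Complex.normSq_nonneg m₁) (Complex.normSq_nonneg m₂)
    nlinarith [hNsq, hpar]
  have hprod : 0 ≤ σ * (n * normSq m₀ - normSq m₁ - normSq m₂) := by
    have := mul_nonneg (neg_nonneg.mpr hσ)
      (by linarith : (0:ℝ) ≤ normSq m₁ + normSq m₂ - n * normSq m₀)
    nlinarith [this]
  have hG0n : n * (σ * normSq m₀ - 2 * δ * (s.re * m₀.re - s.im * m₀.im) + m₀.im + δ) ≤ 0 := by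
    have := mul_le_mul_of_nonneg_left h0 (by linarith : (0:ℝ) ≤ n)
    simpa using this
  have main_id : n * (σ * normSq m₀ - 2 * δ * (s.re * m₀.re - s.im * m₀.im) + m₀.im + δ)
      - (σ * normSq m₁ - 2 * δ * (s.re * m₁.re - s.im * m₁.im) + m₁.im + δ)
      - (σ * normSq m₂ - 2 * δ * (s.re * m₂.re - s.im * m₂.im) + m₂.im + δ)
      - (n - 2) * δ
      = σ * (n * normSq m₀ - normSq m₁ - normSq m₂) := by
    linear_combination (2 * δ * s.re) * hre - (2 * δ * s.im + 1) * him
  have hnd : 2 * δ ≤ n * δ := by nlinarith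
  linarith [main_id, hprod, h1, h2, hG0n, hnd]

lemma laguerre2 (δ : ℝ) (hδ : 0 < δ) (n : ℝ) (hn : 2 ≤ n) (a b c s w : ℂ)
    (ha : a ≠ 0) (hs : Mem δ s) (hw : Mem δ w)
    (heq : (n : ℂ) * (a * s ^ 2 + b * s + c) + (w - s) * (2 * a * s + b) = 0) :
    ∃ t : ℂ, Mem δ t ∧ a * t ^ 2 + b * t + c = 0 := by
  by_contra hcon
  push_neg at hcon
  obtain ⟨d, hd⟩ := IsAlgClosed.exists_pow_nat_eq (b ^ 2 - 4 * a * c) (n := 2) (by norm_num)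
  set t₁ : ℂ := (-b + d) / (2 * a) with ht₁def
  set t₂ : ℂ := (-b - d) / (2 * a) with ht₂def
  have h2a : (2 : ℂ) * a ≠ 0 := by
    simp [ha]
  have hfact : ∀ t : ℂ, a * t ^ 2 + b * t + c = a * (t - t₁) * (t - t₂) := by
    intro t
    rw [ht₁def, ht₂def]
    field_simp
    linear_combination hd
  have ht₁ : 0 < δ * Complex.normSq t₁ + t₁.im := by
    by_contra h
    exact hcon t₁ (not_lt.mp h) (by rw [hfact t₁]; ring)
  have ht₂ : 0 < δ * Complex.normSq t₂ + t₂.im := by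
    by_contra h
    exact hcon t₂ (not_lt.mp h) (by rw [hfact t₂]; ring)
  have hqs : a * s ^ 2 + b * s + c ≠ 0 := hcon s hs
  have hnC : (n : ℂ) ≠ 0 := by
    simpa using (Complex.ofReal_ne_zero.mpr (by linarith : n ≠ 0))
  have hfac2 : (w - s) * (2 * a * s + b) = -((n : ℂ) * (a * s ^ 2 + b * s + c)) := by
    linear_combination heq
  have hprodne : (w - s) * (2 * a * s + b) ≠ 0 := by
    rw [hfac2]
    exact neg_ne_zero.mpr (mul_ne_zero hnC hqs)
  have hws : w - s ≠ 0 := fun h => hprodne (by rw [h, zero_mul])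
  have hfs : a * (s - t₁) * (s - t₂) ≠ 0 := by rw [← hfact s]; exact hqs
  have hst₁ : s - t₁ ≠ 0 := fun h => hfs (by rw [h]; ring)
  have hst₂ : s - t₂ ≠ 0 := fun h => hfs (by rw [h]; ring)
  have hab : a * ((s - t₁) + (s - t₂)) = 2 * a * s + b := by
    rw [ht₁def, ht₂def]
    field_simp
    ring
  have key2 : ((s - t₁) + (s - t₂)) * (s - w) = (n : ℂ) * ((s - t₁) * (s - t₂)) := by
    apply mul_left_cancel₀ ha
    have h1 : a * (((s - t₁) + (s - t₂)) * (s - w)) = (2 * a * s + b) * (s - w) := by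
      rw [← hab]; ring
    have h2 : a * ((n : ℂ) * ((s - t₁) * (s - t₂))) = (n : ℂ) * (a * s ^ 2 + b * s + c) := by
      rw [hfact s]; ring
    rw [h1, h2]
    linear_combination -heq
  set m₁ : ℂ := (s - t₁)⁻¹ with hm₁
  set m₂ : ℂ := (s - t₂)⁻¹ with hm₂
  set m₀ : ℂ := (s - w)⁻¹ with hm₀
  have hm₁0 : m₁ ≠ 0 := inv_ne_zero hst₁
  have hm₂0 : m₂ ≠ 0 := inv_ne_zero hst₂
  have hm₀0 : m₀ ≠ 0 := inv_ne_zero (sub_ne_zero.mpr (Ne.symm (sub_ne_zero.mp hws)))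
  have hsw : s - w ≠ 0 := sub_ne_zero.mpr (Ne.symm (sub_ne_zero.mp hws))
  have hsum : m₁ + m₂ = (n : ℂ) * m₀ := by
    rw [hm₁, hm₂, hm₀]
    field_simp
    linear_combination key2
  -- the G function values
  have hG1 : 0 < (δ * Complex.normSq s + s.im) * Complex.normSq m₁
      - 2 * δ * (s.re * m₁.re - s.im * m₁.im) + m₁.im + δ := by
    rw [← keyG δ s m₁ hm₁0]
    have : s - m₁⁻¹ = t₁ := by rw [hm₁, inv_inv]; ring
    rw [this]
    exact mul_pos (Complex.normSq_pos.mpr hm₁0) ht₁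
  have hG2 : 0 < (δ * Complex.normSq s + s.im) * Complex.normSq m₂
      - 2 * δ * (s.re * m₂.re - s.im * m₂.im) + m₂.im + δ := by
    rw [← keyG δ s m₂ hm₂0]
    have : s - m₂⁻¹ = t₂ := by rw [hm₂, inv_inv]; ring
    rw [this]
    exact mul_pos (Complex.normSq_pos.mpr hm₂0) ht₂
  have hG0 : (δ * Complex.normSq s + s.im) * Complex.normSq m₀
      - 2 * δ * (s.re * m₀.re - s.im * m₀.im) + m₀.im + δ ≤ 0 := by
    rw [← keyG δ s m₀ hm₀0]
    have : s - m₀⁻¹ = w := by rw [hm₀, inv_inv]; ring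
    rw [this]
    exact mul_nonpos_of_nonneg_of_nonpos (Complex.normSq_nonneg m₀) hw
  exact concave_step δ n (δ * Complex.normSq s + s.im) hδ hn hs s m₀ m₁ m₂ hsum hG1 hG2 hG0

lemma gws (δ : ℝ) (hδ : 0 < δ) (A : ℂ) (hA : A ≠ 0) (R : Multiset ℂ) :
    ∀ B C : ℂ, (∀ v ∈ R, Mem δ v) →
    A * (R.sum ^ 2 - (R.map (fun v => v ^ 2)).sum) + B * R.sum + C = 0 →
    ∃ t : ℂ, Mem δ t ∧
      A * ((R.card : ℂ) ^ 2 - (R.card : ℂ)) * t ^ 2 + B * (R.card : ℂ) * t + C = 0 := by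
  induction R using Multiset.induction with
  | empty =>
    intro B C _ h
    refine ⟨0, mem_zero δ, ?_⟩
    simp at h ⊢
    exact h
  | cons v R ih =>
    intro B C hmem heq
    have hmemR : ∀ u ∈ R, Mem δ u := fun u hu => hmem u (Multiset.mem_cons_of_mem hu)
    have hv : Mem δ v := hmem v (Multiset.mem_cons_self v R)
    have heq' : A * (R.sum ^ 2 - (R.map (fun v => v ^ 2)).sum)
        + (B + 2 * A * v) * R.sum + (C + B * v) = 0 := by
      simp only [Multiset.sum_cons, Multiset.map_cons] at heq
      linear_combination heq
    obtain ⟨s, hsmem, hs⟩ := ih (B + 2 * A * v) (C + B * v) hmemR heq'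
    rcases Nat.eq_zero_or_pos R.card with hc | hc
    · -- R.card = 0 : the equation is C + B*v = 0; take t = v
      refine ⟨v, hv, ?_⟩
      rw [hc] at hs
      simp at hs
      simp [Multiset.card_cons, hc]
      linear_combination hs
    · -- R.card = m ≥ 1
      set m : ℕ := R.card with hm
      have hm1 : (1 : ℝ) ≤ (m : ℝ) := by exact_mod_cast hc
      have ha' : A * (((m : ℂ) + 1) ^ 2 - ((m : ℂ) + 1)) ≠ 0 := by
        apply mul_ne_zero hA
        have : ((m : ℂ) + 1) ^ 2 - ((m : ℂ) + 1) = ((m : ℂ) + 1) * (m : ℂ) := by ring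
        rw [this]
        apply mul_ne_zero
        · exact Nat.cast_add_one_ne_zero m
        · exact Nat.cast_ne_zero.mpr (Nat.pos_of_ne_zero (by omega : R.card ≠ 0) |>.ne')
      have hlag := laguerre2 δ hδ ((m : ℝ) + 1) (by linarith)
        (A * (((m : ℂ) + 1) ^ 2 - ((m : ℂ) + 1))) (B * ((m : ℂ) + 1)) C s v ha' hsmem hv ?_
      · obtain ⟨t, htmem, ht⟩ := hlag
        refine ⟨t, htmem, ?_⟩
        simp only [Multiset.card_cons]
        push_cast
        linear_combination ht
      · push_cast
        linear_combination ((m : ℂ) + 1) * hs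

set_option maxHeartbeats 1000000 in
lemma noroot (β : ℝ) (h0 : 0 < β) (h1 : β < 1) (z : ℂ) (hδ : 0 < z.im)
    (n : ℕ) (t : ℂ) (hMem : Mem (z.im) t) :
    (z ^ 2 - 1) * ((n : ℂ) ^ 2 - (n : ℂ)) * t ^ 2 + 2 * z * (n : ℂ) * t + (β : ℂ) ≠ 0 := by
  intro heq
  have hβC : (β : ℂ) ≠ 0 := Complex.ofReal_ne_zero.mpr h0.ne'
  rcases Nat.eq_zero_or_pos n with hn0 | hn1
  · rw [hn0] at heq
    simp at heq
    exact absurd heq h0.ne'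
  have hnR : (1 : ℝ) ≤ (n : ℝ) := by exact_mod_cast hn1
  have ht0 : t ≠ 0 := by
    intro h
    rw [h] at heq
    simp at heq
    exact absurd heq h0.ne'
  set w : ℂ := t⁻¹ with hwdef
  have hw : z.im ≤ w.im := im_of_mem z.im hMem ht0
  have htw : t * w = 1 := mul_inv_cancel₀ ht0
  have heqw : (β : ℂ) * w ^ 2 + 2 * (n : ℂ) * z * w
      + (n : ℂ) * ((n : ℂ) - 1) * (z ^ 2 - 1) = 0 := by
    linear_combination w ^ 2 * heq -
      ((z ^ 2 - 1) * ((n : ℂ) ^ 2 - (n : ℂ)) * (t * w + 1) + 2 * z * (n : ℂ) * w) * htw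
  set ξ : ℂ := (β : ℂ) * w + (n : ℂ) * z with hξdef
  have hξ2 : ξ ^ 2 = ((n : ℂ) ^ 2 - (β : ℂ) * (n : ℂ) * ((n : ℂ) - 1)) * z ^ 2
      + (β : ℂ) * (n : ℂ) * ((n : ℂ) - 1) := by
    linear_combination (β : ℂ) * heqw
  rw [Complex.ext_iff] at hξ2
  obtain ⟨h_re, h_im⟩ := hξ2
  simp only [sq, Complex.mul_re, Complex.mul_im, Complex.add_re, Complex.add_im,
    Complex.sub_re, Complex.sub_im, Complex.ofReal_re, Complex.ofReal_im,
    Complex.natCast_re, Complex.natCast_im, Complex.one_re, Complex.one_im] at h_re h_im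
  have e1 : ξ.re ^ 2 - ξ.im ^ 2
      = ((n : ℝ) ^ 2 - β * (n : ℝ) * ((n : ℝ) - 1)) * (z.re ^ 2 - z.im ^ 2)
        + β * (n : ℝ) * ((n : ℝ) - 1) := by
    linear_combination h_re
  have e2 : ξ.re * ξ.im = ((n : ℝ) ^ 2 - β * (n : ℝ) * ((n : ℝ) - 1)) * z.re * z.im := by
    linear_combination h_im / 2
  have hξim : ξ.im = β * w.im + (n : ℝ) * z.im := by
    rw [hξdef]
    simp [Complex.add_im, Complex.mul_im, Complex.ofReal_re, Complex.ofReal_im,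
      Complex.natCast_re, Complex.natCast_im]
  have hnβδ : 0 < ((n : ℝ) + β) * z.im := by nlinarith [hnR, h0, hδ]
  have hdd_ge : ((n : ℝ) + β) * z.im ≤ ξ.im := by
    rw [hξim]
    nlinarith [hw, h0]
  have hKd : ((n : ℝ) + β) ^ 2 * z.im ^ 2 ≤ ξ.im ^ 2 := by
    nlinarith [hdd_ge, hnβδ]
  have hfactphi : (((n : ℝ) + β) ^ 2 * z.im ^ 2) ^ 2
      + (((n : ℝ) + β) ^ 2 * z.im ^ 2) * (((n : ℝ) ^ 2 - β * (n : ℝ) * ((n : ℝ) - 1))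
        * (z.re ^ 2 - z.im ^ 2) + β * (n : ℝ) * ((n : ℝ) - 1))
      - (((n : ℝ) ^ 2 - β * (n : ℝ) * ((n : ℝ) - 1)) * z.re * z.im) ^ 2
      = (((n : ℝ) + β) ^ 2 * z.im ^ 2 - ξ.im ^ 2) * (((n : ℝ) + β) ^ 2 * z.im ^ 2 + ξ.re ^ 2) := by
    linear_combination (-(((n : ℝ) + β) ^ 2 * z.im ^ 2)) * e1
      + (ξ.re * ξ.im + ((n : ℝ) ^ 2 - β * (n : ℝ) * ((n : ℝ) - 1)) * z.re * z.im) * e2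
  have hphile : (((n : ℝ) + β) ^ 2 * z.im ^ 2) ^ 2
      + (((n : ℝ) + β) ^ 2 * z.im ^ 2) * (((n : ℝ) ^ 2 - β * (n : ℝ) * ((n : ℝ) - 1))
        * (z.re ^ 2 - z.im ^ 2) + β * (n : ℝ) * ((n : ℝ) - 1))
      - (((n : ℝ) ^ 2 - β * (n : ℝ) * ((n : ℝ) - 1)) * z.re * z.im) ^ 2 ≤ 0 := by
    rw [hfactphi]
    apply mul_nonpos_of_nonpos_of_nonneg
    · linarith
    · nlinarith [sq_nonneg ξ.re, sq_nonneg (((n : ℝ) + β) * z.im)]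
  have hlampos : 0 < (n : ℝ) ^ 2 - β * (n : ℝ) * ((n : ℝ) - 1) := by
    nlinarith [hnR, h0, h1]
  have hmupos : 0 ≤ β * (n : ℝ) * ((n : ℝ) - 1) :=
    mul_nonneg (mul_nonneg h0.le (by linarith : (0:ℝ) ≤ (n : ℝ))) (by linarith : (0:ℝ) ≤ (n : ℝ) - 1)
  have hringid : (((n : ℝ) + β) ^ 2 * z.im ^ 2) ^ 2
      + (((n : ℝ) + β) ^ 2 * z.im ^ 2) * (((n : ℝ) ^ 2 - β * (n : ℝ) * ((n : ℝ) - 1))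
        * (z.re ^ 2 - z.im ^ 2) + β * (n : ℝ) * ((n : ℝ) - 1))
      - (((n : ℝ) ^ 2 - β * (n : ℝ) * ((n : ℝ) - 1)) * z.re * z.im) ^ 2
      = z.im ^ 2 * (((((n : ℝ) + β) ^ 2 * z.im ^ 2
          + ((n : ℝ) ^ 2 - β * (n : ℝ) * ((n : ℝ) - 1)) * z.re ^ 2))
            * (β * ((n : ℝ) ^ 2 + (n : ℝ) + β))
          + ((n : ℝ) + β) ^ 2 * (β * (n : ℝ) * ((n : ℝ) - 1))) := by
    ring
  have hb2 : 0 < β * ((n : ℝ) ^ 2 + (n : ℝ) + β) := by nlinarith [hnR, h0]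
  have ht1 : 0 < ((n : ℝ) + β) ^ 2 * z.im ^ 2
      + ((n : ℝ) ^ 2 - β * (n : ℝ) * ((n : ℝ) - 1)) * z.re ^ 2 := by
    nlinarith [hlampos, sq_nonneg z.re, hδ, hnβδ]
  have hphipos : 0 < (((n : ℝ) + β) ^ 2 * z.im ^ 2) ^ 2
      + (((n : ℝ) + β) ^ 2 * z.im ^ 2) * (((n : ℝ) ^ 2 - β * (n : ℝ) * ((n : ℝ) - 1))
        * (z.re ^ 2 - z.im ^ 2) + β * (n : ℝ) * ((n : ℝ) - 1))
      - (((n : ℝ) ^ 2 - β * (n : ℝ) * ((n : ℝ) - 1)) * z.re * z.im) ^ 2 := by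
    rw [hringid]
    have hsq : 0 < z.im ^ 2 := by positivity
    have hZ : 0 ≤ ((n : ℝ) + β) ^ 2 * (β * (n : ℝ) * ((n : ℝ) - 1)) :=
      mul_nonneg (sq_nonneg _) hmupos
    have hXY := mul_pos ht1 hb2
    exact mul_pos hsq (by linarith)
  linarith

lemma prod_evals (z : ℂ) (R : Multiset ℂ) (hR : ∀ r ∈ R, z - r ≠ 0) :
    eval z ((R.map (fun r => X - C r)).prod) ≠ 0 ∧
    eval z (derivative ((R.map (fun r => X - C r)).prod))
      = eval z ((R.map (fun r => X - C r)).prod) * ((R.map (fun r => (z - r)⁻¹)).sum) ∧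
    eval z (derivative (derivative ((R.map (fun r => X - C r)).prod)))
      = eval z ((R.map (fun r => X - C r)).prod) *
          (((R.map (fun r => (z - r)⁻¹)).sum) ^ 2 - ((R.map (fun r => ((z - r)⁻¹) ^ 2)).sum)) := by
  induction R using Multiset.induction with
  | empty => simp
  | cons r R ih =>
    have hzr : z - r ≠ 0 := hR r (Multiset.mem_cons_self r R)
    obtain ⟨h0, h1, h2⟩ := ih (fun u hu => hR u (Multiset.mem_cons_of_mem hu))
    simp only [Multiset.map_cons, Multiset.prod_cons, Multiset.sum_cons]
    set P := ((R.map (fun r => X - C r)).prod) with hP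
    set S := ((R.map (fun r => (z - r)⁻¹)).sum) with hS
    set Q := ((R.map (fun r => ((z - r)⁻¹) ^ 2)).sum) with hQ
    have hderiv : derivative ((X - C r) * P) = P + (X - C r) * derivative P := by
      rw [derivative_mul]
      simp
    have hderiv2 : derivative (derivative ((X - C r) * P))
        = 2 * derivative P + (X - C r) * derivative (derivative P) := by
      rw [hderiv, derivative_add, derivative_mul]
      simp
      ring
    constructor
    · simp only [eval_mul, eval_sub, eval_X, eval_C]
      exact mul_ne_zero hzr h0
    constructor
    · rw [hderiv]
      simp only [eval_add, eval_mul, eval_sub, eval_X, eval_C, h1]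
      field_simp
    · rw [hderiv2]
      simp only [eval_add, eval_mul, eval_sub, eval_X, eval_C, eval_ofNat, h1, h2]
      field_simp
      ring

lemma main_nv (β : ℝ) (h0 : 0 < β) (h1 : β < 1) (f : Polynomial ℝ)
    (hroots : ∀ x ∈ (f.map (algebraMap ℝ ℂ)).roots, x.im = 0) (hf0 : f ≠ 0)
    (z : ℂ) (hz : 0 < z.im) :
    eval z (map (algebraMap ℝ ℂ) ((X ^ 2 - 1) * derivative (derivative f)
      + 2 * X * derivative f + C β * f)) ≠ 0 := by
  set F : Polynomial ℂ := f.map (algebraMap ℝ ℂ) with hF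
  have hF0 : F ≠ 0 := Polynomial.map_ne_zero hf0
  have hsplit : F.roots.card = F.natDegree :=
    (Polynomial.splits_iff_card_roots).mp (IsAlgClosed.splits F)
  have hfact := Polynomial.C_leadingCoeff_mul_prod_multiset_X_sub_C hsplit
  set R : Multiset ℂ := F.roots with hR
  set c : ℂ := F.leadingCoeff with hc
  have hc0 : c ≠ 0 := Polynomial.leadingCoeff_ne_zero.mpr hF0
  have hzr : ∀ r ∈ R, z - r ≠ 0 := by
    intro r hr h
    have h2 := congrArg Complex.im h
    rw [Complex.sub_im, hroots r hr, Complex.zero_im, sub_zero] at h2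
    exact hz.ne' h2
  obtain ⟨hP0, hP1, hP2⟩ := prod_evals z R hzr
  set P : Polynomial ℂ := (R.map (fun r => X - C r)).prod with hPdef
  set S : ℂ := (R.map (fun r => (z - r)⁻¹)).sum with hSdef
  set Q : ℂ := (R.map (fun r => ((z - r)⁻¹) ^ 2)).sum with hQdef
  intro heval
  -- rewrite the evaluation
  have hmapg : eval z (map (algebraMap ℝ ℂ) ((X ^ 2 - 1) * derivative (derivative f)
      + 2 * X * derivative f + C β * f))
      = (z ^ 2 - 1) * eval z (derivative (derivative F))
        + 2 * z * eval z (derivative F) + (β : ℂ) * eval z F := by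
    simp only [Polynomial.map_add, Polynomial.map_mul, Polynomial.map_sub, Polynomial.map_pow,
      Polynomial.map_X, Polynomial.map_one, Polynomial.map_C, Polynomial.map_ofNat,
      Polynomial.derivative_map, eval_add, eval_mul, eval_sub, eval_pow, eval_X, eval_one,
      eval_C, eval_ofNat, hF, Complex.coe_algebraMap]
  rw [hmapg] at heval
  -- plug in the factorization
  have hFeq : F = C c * P := hfact.symm
  have hevF : eval z F = c * eval z P := by rw [hFeq]; simp
  have hevF1 : eval z (derivative F) = c * (eval z P * S) := by
    rw [hFeq, Polynomial.derivative_C_mul]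
    simp [hP1]
  have hevF2 : eval z (derivative (derivative F)) = c * (eval z P * (S ^ 2 - Q)) := by
    rw [hFeq, Polynomial.derivative_C_mul, Polynomial.derivative_C_mul]
    simp [hP2]
  rw [hevF, hevF1, hevF2] at heval
  have hcP : c * eval z P ≠ 0 := mul_ne_zero hc0 hP0
  have hE : (z ^ 2 - 1) * (S ^ 2 - Q) + (2 * z) * S + (β : ℂ) = 0 := by
    have : (c * eval z P) * ((z ^ 2 - 1) * (S ^ 2 - Q) + (2 * z) * S + (β : ℂ)) = 0 := by
      linear_combination heval
    exact (mul_eq_zero.mp this).resolve_left hcP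
  -- z² ≠ 1
  have hA : z ^ 2 - 1 ≠ 0 := by
    intro h
    have h2 : (z - 1) * (z + 1) = 0 := by linear_combination h
    rcases mul_eq_zero.mp h2 with h3 | h3
    · have := congrArg Complex.im h3
      simp at this
      exact hz.ne' this
    · have := congrArg Complex.im h3
      simp at this
      exact hz.ne' this
  -- apply the Grace–Walsh–Szegő style lemma
  set V : Multiset ℂ := R.map (fun r => (z - r)⁻¹) with hV
  have hVmem : ∀ v ∈ V, Mem z.im v := by
    intro v hv
    rw [hV, Multiset.mem_map] at hv
    obtain ⟨r, hr, rfl⟩ := hv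
    apply mem_of_im z.im hz
    rw [Complex.sub_im, hroots r hr, sub_zero]
  have hVsum : V.sum = S := rfl
  have hVsq : (V.map (fun v => v ^ 2)).sum = Q := by
    rw [hV, Multiset.map_map]
    rfl
  have hVcard : V.card = R.card := Multiset.card_map _ _
  obtain ⟨t, htmem, ht⟩ := gws z.im hz (z ^ 2 - 1) hA V (2 * z) (β : ℂ) hVmem
    (by rw [hVsum, hVsq]; linear_combination hE)
  rw [hVcard] at ht
  exact noroot β h0 h1 z hz R.card t htmem (by linear_combination ht)

end Stmt17Aux

theorem stmt_17 (β : ℝ) (h0 : 0 < β) (h1 : β < 1) (f : Polynomial ℝ)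
    (hf : Hyperbolic f) :
    Hyperbolic ((X ^ 2 - 1) * derivative (derivative f) + 2 * X * derivative f
      + C β * f) := by
  rcases eq_or_ne f 0 with rfl | hf0
  · intro z hz
    simp only [derivative_zero, mul_zero, add_zero, zero_add, Polynomial.map_zero] at hz
    simp at hz
  intro z hz
  rw [Polynomial.mem_roots'] at hz
  obtain ⟨hg0, hgz⟩ := hz
  by_contra him
  rcases lt_or_gt_of_ne him with hlt | hgt
  · -- z.im < 0 : use the conjugate
    have hconj : eval ((starRingEnd ℂ) z) (map (algebraMap ℝ ℂ)
        ((X ^ 2 - 1) * derivative (derivative f) + 2 * X * derivative f + C β * f)) = 0 := by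
      have h1' : aeval ((starRingEnd ℂ) z) ((X ^ 2 - 1) * derivative (derivative f)
          + 2 * X * derivative f + C β * f)
          = (starRingEnd ℂ) (aeval z ((X ^ 2 - 1) * derivative (derivative f)
            + 2 * X * derivative f + C β * f)) := Polynomial.aeval_conj _ _
      rw [Polynomial.aeval_def, Polynomial.aeval_def, ← Polynomial.eval_map,
        ← Polynomial.eval_map] at h1'
      rw [h1', hgz]
      simp
    have him' : 0 < ((starRingEnd ℂ) z).im := by
      rw [Complex.conj_im]
      linarith
    exact Stmt17Aux.main_nv β h0 h1 f hf hf0 _ him' hconj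
  · exact Stmt17Aux.main_nv β h0 h1 f hf hf0 z hgt hgz
end

section
/- Let r be a nonzero real number. The geometric sequence (r^k)_{k=0}^∞ is a Legendre multiplier sequence if and only if |r| = 1. -/
open Polynomial

lemma legendre_zero : legendre 0 = 1 := by simp [legendre]

lemma legendre_one : legendre 1 = X := by
  have h : ((X:ℝ[X]) ^ 2 - 1) ^ 1 = X^2 - 1 := by ring
  simp only [legendre, h, Function.iterate_one]
  simp [derivative_sub]
  apply Polynomial.funext; intro x
  simp [Nat.factorial]; ring

lemma legendre_two : legendre 2 = C (3/2) * X^2 - C (1/2) := by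
  have h : ((X:ℝ[X]) ^ 2 - 1) ^ 2 = X^4 - 2*X^2 + 1 := by ring
  simp only [legendre, h, Function.iterate_succ, Function.iterate_zero,
    Function.comp_apply, id_eq, Function.iterate_one]
  simp [derivative_sub, derivative_add, derivative_X_pow]
  apply Polynomial.funext; intro x
  simp [Nat.factorial]; ring

lemma legendre_three : legendre 3 = C (5/2) * X^3 - C (3/2) * X := by
  have h : ((X:ℝ[X]) ^ 2 - 1) ^ 3 = X^6 - 3*X^4 + 3*X^2 - 1 := by ring
  simp only [legendre, h, Function.iterate_succ, Function.iterate_zero,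
    Function.comp_apply, id_eq, Function.iterate_one]
  simp [derivative_sub, derivative_add, derivative_X_pow, derivative_mul]
  apply Polynomial.funext; intro x
  simp [Nat.factorial]; norm_num; ring


lemma polyDerivCompNeg (p : ℝ[X]) :
    (derivative p).comp (-X) = - derivative (p.comp (-X)) := by
  rw [derivative_comp, derivative_neg, derivative_X]
  ring

lemma iter_polyDerivCompNeg (n : ℕ) (p : ℝ[X]) :
    (derivative^[n] p).comp (-X) = C ((-1)^n) * derivative^[n] (p.comp (-X)) := by
  induction n with
  | zero => simp
  | succ n ih =>
    rw [Function.iterate_succ_apply', polyDerivCompNeg, ih, derivative_C_mul,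
      Function.iterate_succ_apply']
    rw [pow_succ]
    simp [C_mul]

lemma legendre_comp_neg (n : ℕ) :
    (legendre n).comp (-X) = C ((-1)^n) * legendre n := by
  have hbase : (((X:ℝ[X]) ^ 2 - 1) ^ n).comp (-X) = ((X:ℝ[X])^2-1)^n := by
    rw [pow_comp, sub_comp, pow_comp, X_comp, one_comp, neg_pow]
    norm_num
  simp only [legendre]
  rw [mul_comp, C_comp, iter_polyDerivCompNeg, hbase]
  ring

lemma hyperbolic_comp_neg {p : ℝ[X]} (hp : Hyperbolic p) : Hyperbolic (p.comp (-X)) := by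
  intro z hz
  rw [Polynomial.map_comp] at hz
  have hz' := Polynomial.mem_roots'.mp hz
  have hmapne : p.map (algebraMap ℝ ℂ) ≠ 0 := by
    intro h0
    rw [h0, zero_comp] at hz'
    exact hz'.1 rfl
  have heval : (p.map (algebraMap ℝ ℂ)).eval (-z) = 0 := by
    have := hz'.2
    rwa [IsRoot, eval_comp, Polynomial.map_neg, map_X, eval_neg, eval_X] at this
  have : (-z).im = 0 := hp _ (Polynomial.mem_roots'.mpr ⟨hmapne, heval⟩)
  simpa using this


-- forward, r = -1
lemma aux_neg_one : IsLegendreMS (fun k => (-1 : ℝ) ^ k) := by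
  intro n a h
  have key : ∑ k ∈ Finset.range n, C ((-1)^k * a k) * legendre k
      = (∑ k ∈ Finset.range n, C (a k) * legendre k).comp (-X) := by
    rw [Polynomial.sum_comp]
    refine Finset.sum_congr rfl fun k _ => ?_
    rw [mul_comp, C_comp, legendre_comp_neg, ← mul_assoc, ← C_mul, mul_comm (a k)]
  show Hyperbolic (∑ k ∈ Finset.range n, C ((-1)^k * a k) * legendre k)
  rw [key]
  exact hyperbolic_comp_neg h


-- case |r| < 1
lemma aux_lt (r : ℝ) (hr : r ≠ 0) (hlt : |r| < 1) (hMS : IsLegendreMS (fun k => r ^ k)) : False := by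
  classical
  set a : ℕ → ℝ := fun k => if k = 0 then 1 else if k = 2 then 2 else 0 with ha
  have hp : ∑ k ∈ Finset.range 3, C (a k) * legendre k = C 3 * X^2 := by
    rw [Finset.sum_range_succ, Finset.sum_range_succ, Finset.sum_range_one,
      legendre_zero, legendre_one, legendre_two]
    simp only [ha]
    norm_num
    apply Polynomial.funext; intro x
    simp; ring
  have hhyp : Hyperbolic (C (3:ℝ) * X^2) := by
    intro z hz
    have hz' := (Polynomial.mem_roots'.mp hz).2
    rw [IsRoot, Polynomial.map_mul, map_C, Polynomial.map_pow, map_X,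
      eval_mul, eval_C, eval_pow, eval_X] at hz'
    have h3 : (algebraMap ℝ ℂ) 3 ≠ 0 := by simp
    have : z ^ 2 = 0 := by
      rcases mul_eq_zero.mp hz' with h | h
      · exact absurd h h3
      · exact h
    have : z = 0 := by
      exact pow_eq_zero_iff (by norm_num) |>.mp this
    simp [this]
  have himg : Hyperbolic (∑ k ∈ Finset.range 3, C (r^k * a k) * legendre k) :=
    hMS 3 a (hp ▸ hhyp)
  have hq : ∑ k ∈ Finset.range 3, C (r^k * a k) * legendre k
      = C (3*r^2) * X^2 + C (1 - r^2) := by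
    rw [Finset.sum_range_succ, Finset.sum_range_succ, Finset.sum_range_one,
      legendre_zero, legendre_one, legendre_two]
    simp only [ha]
    norm_num
    apply Polynomial.funext; intro x
    simp; ring
  rw [hq] at himg
  have hr2 : (0:ℝ) < 1 - r^2 := by nlinarith [abs_nonneg r, sq_abs r]
  have hr2' : (0:ℝ) < 3 * r^2 := by positivity
  set s : ℝ := Real.sqrt ((1 - r^2)/(3*r^2)) with hs
  have hspos : 0 < s := Real.sqrt_pos.mpr (by positivity)
  have hs2 : s^2 = (1 - r^2)/(3*r^2) := Real.sq_sqrt (by positivity)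
  set z : ℂ := (s:ℂ) * Complex.I with hzdef
  have hmap : (C (3*r^2) * X^2 + C (1 - r^2)).map (algebraMap ℝ ℂ)
      = C ((3*r^2 : ℝ):ℂ) * X^2 + C ((1 - r^2 : ℝ):ℂ) := by
    simp [Polynomial.map_add, Polynomial.map_mul, Polynomial.map_pow]
  have hmem : z ∈ ((C (3*r^2) * X^2 + C (1 - r^2)).map (algebraMap ℝ ℂ)).roots := by
    rw [Polynomial.mem_roots', hmap]
    constructor
    · intro h0
      have h2 := congrArg (fun p => Polynomial.coeff p 2) h0
      simp only [coeff_add, coeff_C_mul, coeff_X_pow, coeff_C, coeff_zero] at h2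
      norm_num at h2
      exact hr h2
    · simp only [IsRoot, eval_add, eval_mul, eval_C, eval_pow, eval_X]
      have hz2 : z^2 = -((s^2 : ℝ) : ℂ) := by
        rw [hzdef, mul_pow, Complex.I_sq]; push_cast; ring
      rw [hz2]
      have hkey : (3*r^2) * s^2 = 1 - r^2 := by rw [hs2]; field_simp
      have hkeyC : ((3*r^2 : ℝ):ℂ) * ((s^2:ℝ):ℂ) = ((1 - r^2 : ℝ):ℂ) := by
        exact_mod_cast congrArg (fun x : ℝ => (x:ℂ)) hkey
      linear_combination -hkeyC
  have := himg z hmem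
  rw [hzdef] at this
  simp at this
  exact hspos.ne' this

set_option maxHeartbeats 1000000 in
lemma aux_gt (r : ℝ) (hr : r ≠ 0) (hgt : 1 < |r|) (hMS : IsLegendreMS (fun k => r ^ k)) : False := by
  classical
  have hr2 : (1:ℝ) < r^2 := by nlinarith [sq_abs r, abs_nonneg r]
  set t : ℝ := Real.sqrt ((r^2 - 1)/5) with htdef
  have ht2 : t^2 = (r^2-1)/5 := Real.sq_sqrt (by nlinarith)
  have htpos : 0 < t := Real.sqrt_pos.mpr (by nlinarith)
  have ht0 : t ≠ 0 := htpos.ne'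
  have h5 : r^2 = 1 + 5*t^2 := by rw [ht2]; field_simp; ring
  set a : ℕ → ℝ := fun k =>
    if k = 0 then (-(3/2)*t^3 - (7/6)*t) else if k = 1 then (4*t^2 + 3/5)
    else if k = 2 then (-(7/3)*t) else if k = 3 then (2/5) else 0 with ha
  -- the preimage polynomial is hyperbolic
  have hp : ∑ k ∈ Finset.range 4, C (a k) * legendre k
      = (X - C ((3/2)*t)) * (X - C t)^2 := by
    rw [Finset.sum_range_succ, Finset.sum_range_succ, Finset.sum_range_succ,
      Finset.sum_range_one, legendre_zero, legendre_one, legendre_two, legendre_three]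
    simp only [ha]
    norm_num
    apply Polynomial.funext; intro x
    simp
    ring
  have hhyp : Hyperbolic ((X - C ((3/2)*t)) * (X - C t)^2) := by
    intro z hz
    have hz' := (Polynomial.mem_roots'.mp hz).2
    rw [IsRoot, Polynomial.map_mul, Polynomial.map_pow, Polynomial.map_sub,
      Polynomial.map_sub, map_X, map_C, map_C, eval_mul, eval_pow, eval_sub,
      eval_sub, eval_X, eval_C, eval_C] at hz'
    rcases mul_eq_zero.mp hz' with h | h
    · have : z = ((algebraMap ℝ ℂ) ((3/2)*t)) := by linear_combination h
      rw [this]; exact Complex.ofReal_im _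
    · have : z = ((algebraMap ℝ ℂ) t) := by
        have := pow_eq_zero_iff (n := 2) (by norm_num) |>.mp h
        linear_combination this
      rw [this]; exact Complex.ofReal_im _
  have himg : Hyperbolic (∑ k ∈ Finset.range 4, C (r^k * a k) * legendre k) :=
    hMS 4 a (hp ▸ hhyp)
  -- the image polynomial
  set qR : ℝ[X] := C (r^3) * X^3 + C (-(7/2)*t*r^2) * X^2 + C (t^2*r) * X^1 + C ((13/3)*t^3)
    with hqR
  have hq : ∑ k ∈ Finset.range 4, C (r^k * a k) * legendre k = qR := by
    rw [Finset.sum_range_succ, Finset.sum_range_succ, Finset.sum_range_succ,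
      Finset.sum_range_one, legendre_zero, legendre_one, legendre_two, legendre_three]
    simp only [ha, hqR]
    norm_num
    apply Polynomial.funext; intro x
    simp
    ring_nf
    linear_combination (7*t/6 - (3/5)*r*x) * h5
  rw [hq] at himg
  set QC : Polynomial ℂ := qR.map (algebraMap ℝ ℂ) with hQC
  have hQCex : QC = C ((r:ℂ)^3) * X^3 + C (((-(7/2)*t*r^2 : ℝ)):ℂ) * X^2
      + C ((t^2*r : ℝ):ℂ) * X^1 + C (((13/3)*t^3 : ℝ):ℂ) := by
    simp [hQC, hqR, Polynomial.map_add, Polynomial.map_mul, Polynomial.map_pow]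
  have hr3 : ((r:ℂ))^3 ≠ 0 := pow_ne_zero _ (by exact_mod_cast hr)
  have hdeg : QC.natDegree = 3 := by
    rw [hQCex]; compute_degree!
  have hlead : QC.leadingCoeff = (r:ℂ)^3 := by
    rw [Polynomial.leadingCoeff, hdeg, hQCex]
    simp only [coeff_add, coeff_C_mul, coeff_X_pow, coeff_C]
    norm_num
  have hsp : QC.Splits := IsAlgClosed.splits QC
  have hcard : QC.roots.card = 3 := (splits_iff_card_roots.mp hsp).trans hdeg
  have hfac := hsp.eq_prod_roots
  obtain ⟨z1, z2, z3, hroots⟩ := Multiset.card_eq_three.mp hcard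
  have him1 : z1.im = 0 := himg z1 (by rw [← hQC, hroots]; simp)
  have him2 : z2.im = 0 := himg z2 (by rw [← hQC, hroots]; simp)
  have him3 : z3.im = 0 := himg z3 (by rw [← hQC, hroots]; simp)
  set x1 := z1.re; set x2 := z2.re; set x3 := z3.re
  have hz1 : z1 = (x1:ℂ) := by apply Complex.ext <;> simp [him1] <;> rfl
  have hz2 : z2 = (x2:ℂ) := by apply Complex.ext <;> simp [him2] <;> rfl
  have hz3 : z3 = (x3:ℂ) := by apply Complex.ext <;> simp [him3] <;> rfl
  rw [hroots, hlead, hz1, hz2, hz3] at hfac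
  have hprod : (({(x1:ℂ), (x2:ℂ), (x3:ℂ)} : Multiset ℂ).map (fun a => X - C a)).prod
      = (X - C (x1:ℂ)) * ((X - C (x2:ℂ)) * (X - C (x3:ℂ))) := by
    simp [Multiset.map_cons, Multiset.prod_cons]
  rw [hprod] at hfac
  -- evaluate at real points
  have hevalcast : ∀ w : ℝ, eval ((w:ℝ):ℂ) QC = ((eval w qR : ℝ) : ℂ) := by
    intro w
    rw [hQC, eval_map, show ((w:ℝ):ℂ) = algebraMap ℝ ℂ w from rfl, eval₂_at_apply]
    rfl
  have hEgen : ∀ w : ℝ, eval w qR = r^3 * ((w - x1) * ((w - x2) * (w - x3))) := by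
    intro w
    have h1 := congrArg (eval ((w:ℝ):ℂ)) hfac
    rw [hevalcast] at h1
    simp only [eval_mul, eval_sub, eval_X, eval_C, eval_pow] at h1
    exact_mod_cast h1
  have hv1 : eval (2*t/r) qR = t^3/3 := by
    simp only [hqR, eval_add, eval_mul, eval_pow, eval_C, eval_X]
    field_simp
    ring
  have hv2 : eval (3*t/r) qR = 17*t^3/6 := by
    simp only [hqR, eval_add, eval_mul, eval_pow, eval_C, eval_X]
    field_simp
    ring
  have hv3 : eval (t/r) qR = 17*t^3/6 := by
    simp only [hqR, eval_add, eval_mul, eval_pow, eval_C, eval_X]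
    field_simp
    ring
  set u1 := 2*t - r*x1 with hu1
  set u2 := 2*t - r*x2 with hu2
  set u3 := 2*t - r*x3 with hu3
  have h1 : u1 * (u2 * u3) = t^3/3 := by
    have h := (hEgen (2*t/r)).symm.trans hv1
    field_simp at h
    have key : r^3 * (u1*(u2*u3)*3) = r^3 * t^3 := by
      rw [hu1, hu2, hu3]; linear_combination r^3 * h
    have := mul_left_cancel₀ (pow_ne_zero 3 hr) key
    linear_combination this / 3
  have h2 : (u1 + t) * ((u2 + t) * (u3 + t)) = 17*t^3/6 := by
    have h := (hEgen (3*t/r)).symm.trans hv2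
    field_simp at h
    have key : r^3 * ((u1+t)*((u2+t)*(u3+t))*6) = r^3 * (17*t^3) := by
      rw [hu1, hu2, hu3]; linear_combination r^3 * h
    have := mul_left_cancel₀ (pow_ne_zero 3 hr) key
    linear_combination this / 6
  have h3 : (u1 - t) * ((u2 - t) * (u3 - t)) = 17*t^3/6 := by
    have h := (hEgen (t/r)).symm.trans hv3
    field_simp at h
    have key : r^3 * ((u1-t)*((u2-t)*(u3-t))*6) = r^3 * (17*t^3) := by
      rw [hu1, hu2, hu3]; linear_combination r^3 * h
    have := mul_left_cancel₀ (pow_ne_zero 3 hr) key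
    linear_combination this / 6
  have hQe : u1*u2 + u1*u3 + u2*u3 = -t^2 := by
    have hz : t * ((u1*u2 + u1*u3 + u2*u3) + t^2) = 0 := by linear_combination (h2 - h3)/2
    have := (mul_eq_zero.mp hz).resolve_left ht0
    linarith
  have hSe : u1 + u2 + u3 = 5*t/2 := by
    have hz : t^2 * (2*(u1+u2+u3) - 5*t) = 0 := by linear_combination h2 + h3 - 2*h1
    have := (mul_eq_zero.mp hz).resolve_left (pow_ne_zero _ ht0)
    linarith
  have hsos : (u1*u2)^2 + (u1*u3)^2 + (u2*u3)^2
      = (u1*u2 + u1*u3 + u2*u3)^2 - 2*(u1*(u2*u3))*(u1+u2+u3) := by ring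
  rw [hQe, h1, hSe] at hsos
  have ht4 : 0 < t^4 := by positivity
  nlinarith [sq_nonneg (u1*u2), sq_nonneg (u1*u3), sq_nonneg (u2*u3)]


theorem stmt_19 (r : ℝ) (hr : r ≠ 0) :
    IsLegendreMS (fun k => r ^ k) ↔ |r| = 1 := by
  constructor
  · intro hMS
    by_contra habs
    rcases lt_or_gt_of_ne habs with hlt | hgt
    · exact aux_lt r hr hlt hMS
    · exact aux_gt r hr hgt hMS
  · intro habs
    rcases (abs_eq (by norm_num : (0:ℝ) ≤ 1)).mp habs with h1 | h1 <;> subst h1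
    · intro n a h
      simpa using h
    · exact aux_neg_one
end
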